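/- The top-2 aggregation operation f((v1,v2),(v3,v4)) = (m1, m2), where m1 is the maximum of {v1,v3} and m2 is the maximum of {v1,v2,v3,v4} \ {m1} (with multiplicity, defined on pairs from a linear order extended with a bottom element ⊥ less than all elements, where each pair (a,b) satisfies b ≤ a), is associative. -/
import Mathlib


/-- The top-2 aggregation f((v1,v2),(v3,v4)) = (max v1 v3, max (min v1 v3) (max v2 v4)),
defined on pairs over a linear order with bottom element ⊥ where each pair (a,b)
satisfies b ≤ a, is associative. -/
theorem stmt7 {V : Type*} [LinearOrder V]
    (f : (WithBot V × WithBot V) → (WithBot V × WithBot V) → (WithBot V × WithBot V))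
    (hf : ∀ x y, f x y = (max x.1 y.1, max (min x.1 y.1) (max x.2 y.2)))
    (x y z : WithBot V × WithBot V)
    (hx : x.2 ≤ x.1) (hy : y.2 ≤ y.1) (hz : z.2 ≤ z.1) :
    f (f x y) z = f x (f y z) := by
  obtain ⟨a, b⟩ := x; obtain ⟨c, d⟩ := y; obtain ⟨e, g⟩ := z
  simp only [hf]
  refine Prod.ext (max_assoc ..) ?_
  simp only [min_max_distrib_left, min_max_distrib_right]
  simp only [sup_assoc, sup_comm, sup_left_comm]
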